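/- The map from the group of finitely supported families (a_{m,n})_{(m,n)∈ℕ×ℕ} with a_{m,n} ∈ M₀ to M, sending (a_{m,n}) to Σ_{(m,n)} T^m(U_n(a_{m,n})), is an isomorphism of abelian groups. (Proposition 3.8 (Heis-mod-prop)(i): M ≅ M₀[t,u^{[•]}] as a module over ℤ[t, u^{[•]}, ∂_t^{[•]}, ∂_u].) -/

import Mathlib

set_option maxHeartbeats 1000000 in
/-- Proposition 3.8 (Heis-mod-prop)(i): for a module `M` over the divided-power ring
`ℤ[t, u^{[•]}, ∂_t^{[•]}, ∂_u]` (with `T, U_d, E_d, D` playing the roles of `t`, the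
divided powers `u^{[d]}`, the divided powers `∂_t^{[d]}`, and `∂_u`) on which `D` and
the `E_d` are locally nilpotent, the map sending a finitely supported family
`(a_{m,n})` of elements of `M₀ = {x : D x = 0, E_d x = 0 for d ≥ 1}` to
`Σ T^m(U_n(a_{m,n}))` is an isomorphism of abelian groups `M₀[t,u^{[•]}] ≅ M`. -/
theorem stmt10 (M : Type*) [AddCommGroup M] (T D : AddMonoid.End M)
    (U E : ℕ → AddMonoid.End M)
    (hU0 : U 0 = 1) (hE0 : E 0 = 1)
    (hUU : ∀ a b : ℕ, U a * U b = (a + b).choose a • U (a + b))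
    (hEE : ∀ a b : ℕ, E a * E b = (a + b).choose a • E (a + b))
    (hTU : ∀ d : ℕ, T * U d = U d * T)
    (hDE : ∀ d : ℕ, D * E d = E d * D)
    (hEU : ∀ d e : ℕ, E d * U e = U e * E d)
    (hDT : D * T = T * D)
    (hDU : ∀ d : ℕ, 1 ≤ d → D * U d - U d * D = U (d - 1))
    (hET : ∀ d : ℕ, 1 ≤ d → E d * T - T * E d = E (d - 1))
    (hnil : ∀ x : M, ∃ n : ℕ, (D ^ n) x = 0 ∧ ∀ d : ℕ, n ≤ d → (E d) x = 0)
    (M₀ : AddSubgroup M)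
    (hM₀ : ∀ x : M, x ∈ M₀ ↔ (D x = 0 ∧ ∀ d : ℕ, 1 ≤ d → (E d) x = 0)) :
    ∃ φ : ((ℕ × ℕ) →₀ M₀) ≃+ M,
      ∀ a : (ℕ × ℕ) →₀ M₀, φ a = a.sum fun p v => (T ^ p.1) ((U p.2) (v : M)) := by
  have hmul : ∀ (f g : AddMonoid.End M) (x : M), (f * g) x = f (g x) := fun _ _ _ => rfl
  -- D commutes with powers of T pointwise
  have hDTm : ∀ (m : ℕ) (x : M), D ((T ^ m) x) = (T ^ m) (D x) := by
    intro m
    induction m with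
    | zero => intro x; simp
    | succ k ih =>
      intro x
      have h1 : (T ^ (k + 1)) x = (T ^ k) (T x) := by rw [pow_succ]; rfl
      have h2 : (T ^ (k + 1)) (D x) = (T ^ k) (T (D x)) := by rw [pow_succ]; rfl
      rw [h1, h2, ih (T x)]
      have : D (T x) = T (D x) := DFunLike.congr_fun hDT x
      rw [this]
  -- pointwise commutation of D^n with T^m
  have hDnTm : ∀ (n m : ℕ) (x : M), (D ^ n) ((T ^ m) x) = (T ^ m) ((D ^ n) x) := by
    intro n
    induction n with
    | zero => intro m x; simp
    | succ k ih =>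
      intro m x
      have h1 : ∀ y : M, (D ^ (k + 1)) y = (D ^ k) (D y) := by
        intro y; rw [pow_succ]; rfl
      rw [h1, h1, hDTm, ih]
  -- D on U k v for v killed by D
  have hDUv : ∀ (x : M), D x = 0 → ∀ k : ℕ, 1 ≤ k → D ((U k) x) = (U (k - 1)) x := by
    intro x hx k hk
    have h := DFunLike.congr_fun (hDU k hk) x
    have h2 : D ((U k) x) - (U k) (D x) = (U (k - 1)) x := h
    rwa [hx, map_zero, sub_zero] at h2
  have hDnU : ∀ (x : M), D x = 0 → ∀ (n k : ℕ),
      (D ^ n) ((U k) x) = if n ≤ k then (U (k - n)) x else 0 := by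
    intro x hx n
    induction n with
    | zero => intro k; simp
    | succ j ih =>
      intro k
      have h1 : (D ^ (j + 1)) ((U k) x) = (D ^ j) (D ((U k) x)) := by
        rw [pow_succ]; rfl
      rcases Nat.eq_zero_or_pos k with rfl | hk
      · have : D ((U 0) x) = 0 := by rw [hU0]; simpa using hx
        rw [h1, this, map_zero]
        simp
      · rw [h1, hDUv x hx k hk, ih (k - 1)]
        by_cases h : j + 1 ≤ k
        · rw [if_pos (show j ≤ k - 1 by omega), if_pos h]
          congr 2
          omega
        · rw [if_neg (show ¬ j ≤ k - 1 by omega), if_neg h]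
  -- E d on T x
  have hETv : ∀ (x : M) (d : ℕ), 1 ≤ d → (E d) (T x) = T ((E d) x) + (E (d - 1)) x := by
    intro x d hd
    have h := DFunLike.congr_fun (hET d hd) x
    have h2 : (E d) (T x) - T ((E d) x) = (E (d - 1)) x := h
    rw [sub_eq_iff_eq_add] at h2
    rw [h2]
    abel
  have hETn : ∀ (x : M), (∀ d : ℕ, 1 ≤ d → (E d) x = 0) → ∀ (m d : ℕ),
      (E d) ((T ^ m) x) = (m.choose d) • ((T ^ (m - d)) x) := by
    intro x hx m
    induction m with
    | zero =>
      intro d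
      cases d with
      | zero => simp [hE0]
      | succ e =>
        have : (E (e + 1)) x = 0 := hx (e + 1) (Nat.succ_le_succ (Nat.zero_le e))
        simpa [this] using (Nat.choose_eq_zero_of_lt (Nat.succ_pos e)) ▸ rfl
    | succ j ih =>
      intro d
      have h1 : (T ^ (j + 1)) x = T ((T ^ j) x) := by rw [pow_succ']; rfl
      cases d with
      | zero => simp [hE0]
      | succ e =>
        rw [h1, hETv _ (e + 1) (Nat.succ_le_succ (Nat.zero_le e)), ih (e + 1)]
        have he1 : (e + 1) - 1 = e := rfl
        rw [he1, ih e]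
        rw [map_nsmul]
        rcases lt_trichotomy j e with hje | hje | hje
        · have c1 : j.choose (e + 1) = 0 := Nat.choose_eq_zero_of_lt (by omega)
          have c2 : j.choose e = 0 := Nat.choose_eq_zero_of_lt hje
          have c3 : (j + 1).choose (e + 1) = 0 := Nat.choose_eq_zero_of_lt (by omega)
          simp [c1, c2, c3]
        · subst hje
          have c1 : j.choose (j + 1) = 0 := Nat.choose_eq_zero_of_lt (by omega)
          simp [c1, Nat.choose_self]
        · -- e < j
          have hTT : T ((T ^ (j - (e + 1))) x) = (T ^ (j - e)) x := by
            have : j - e = (j - (e + 1)) + 1 := by omega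
            rw [this, pow_succ']; rfl
          rw [hTT]
          have hsub : j + 1 - (e + 1) = j - e := by omega
          rw [hsub, Nat.choose_succ_succ, add_nsmul]
          exact add_comm _ _
  -- E commutes with U pointwise
  have hEUv : ∀ (d k : ℕ) (x : M), (E d) ((U k) x) = (U k) ((E d) x) := by
    intro d k x
    have h := DFunLike.congr_fun (hEU d k) x
    rw [hmul, hmul] at h
    exact h
  -- key evaluation lemma
  have hkey : ∀ (v : M), D v = 0 → (∀ d : ℕ, 1 ≤ d → (E d) v = 0) →
      ∀ (m n m' n' : ℕ),
      (E m) ((D ^ n) ((T ^ m') ((U n') v))) =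
        if n ≤ n' then (m'.choose m) • ((T ^ (m' - m)) ((U (n' - n)) v)) else 0 := by
    intro v hv hv' m n m' n'
    rw [hDnTm, hDnU v hv n n']
    by_cases h : n ≤ n'
    · rw [if_pos h, if_pos h]
      have hx : ∀ d : ℕ, 1 ≤ d → (E d) ((U (n' - n)) v) = 0 := by
        intro d hd
        rw [hEUv, hv' d hd, map_zero]
      exact hETn _ hx m' m
    · rw [if_neg h, if_neg h, map_zero, map_zero]
  -- the forward map
  set f : ℕ × ℕ → (M₀ →+ M) :=
    fun p => ((T ^ p.1 * U p.2 : AddMonoid.End M) : M →+ M).comp M₀.subtype with hf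
  set φ' : ((ℕ × ℕ) →₀ M₀) →+ M := Finsupp.liftAddHom f with hφ'
  have hφapp : ∀ a : (ℕ × ℕ) →₀ M₀,
      φ' a = a.sum fun p v => (T ^ p.1) ((U p.2) (v : M)) := by
    intro a
    rw [hφ', Finsupp.liftAddHom_apply]
    rfl
  -- membership facts for M₀ elements
  have hmemD : ∀ v : M₀, D (v : M) = 0 := fun v => ((hM₀ v).mp v.2).1
  have hmemE : ∀ v : M₀, ∀ d : ℕ, 1 ≤ d → (E d) (v : M) = 0 := fun v => ((hM₀ v).mp v.2).2
  -- injectivity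
  have hinj : Function.Injective φ' := by
    rw [injective_iff_map_eq_zero]
    intro a ha
    by_contra hne
    have hs : a.support.Nonempty := Finsupp.support_nonempty_iff.mpr hne
    set m : ℕ := (a.support.image Prod.fst).max' (hs.image _) with hm
    have hSne : (a.support.filter (fun p => p.1 = m)).Nonempty := by
      obtain ⟨p, hp, hpm⟩ := Finset.mem_image.mp ((a.support.image Prod.fst).max'_mem (hs.image _))
      exact ⟨p, Finset.mem_filter.mpr ⟨hp, hpm⟩⟩
    set n : ℕ := ((a.support.filter (fun p => p.1 = m)).image Prod.snd).max' (hSne.image _) with hn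
    have hmem : (m, n) ∈ a.support := by
      obtain ⟨p, hp, hpn⟩ := Finset.mem_image.mp
        (((a.support.filter (fun p => p.1 = m)).image Prod.snd).max'_mem (hSne.image _))
      obtain ⟨hp1, hp2⟩ := Finset.mem_filter.mp hp
      have : p = (m, n) := Prod.ext hp2 hpn
      rwa [this] at hp1
    have hcalc : (E m) ((D ^ n) (φ' a)) = (a (m, n) : M) := by
      rw [hφapp, Finsupp.sum, map_sum, map_sum]
      rw [Finset.sum_eq_single (m, n)]
      · rw [hkey _ (hmemD _) (hmemE _), if_pos (le_refl n), Nat.choose_self,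
          Nat.sub_self, Nat.sub_self, one_smul, pow_zero, hU0]
        rfl
      · intro p hp hpne
        rw [hkey _ (hmemD _) (hmemE _)]
        have hple : p.1 ≤ m := by
          apply Finset.le_max'
          exact Finset.mem_image_of_mem Prod.fst hp
        rcases lt_or_eq_of_le hple with hlt | heq
        · rw [Nat.choose_eq_zero_of_lt hlt]
          simp
        · have hp2 : p.2 ≤ n := by
            apply Finset.le_max'
            exact Finset.mem_image_of_mem Prod.snd (Finset.mem_filter.mpr ⟨hp, heq⟩)
          have hp2lt : p.2 < n := by
            rcases lt_or_eq_of_le hp2 with h | h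
            · exact h
            · exact absurd (Prod.ext heq h) hpne
          rw [if_neg (by omega)]
      · intro hnot
        exact absurd hmem hnot
    rw [ha, map_zero, map_zero] at hcalc
    have : a (m, n) = 0 := Subtype.ext hcalc.symm
    exact (Finsupp.mem_support_iff.mp hmem) this
  -- surjectivity via the subgroup S
  set S : AddSubgroup M :=
    AddSubgroup.closure {x | ∃ (m n : ℕ) (v : M₀), x = (T ^ m) ((U n) (v : M))} with hS
  have hgen : ∀ (m n : ℕ) (v : M₀), (T ^ m) ((U n) (v : M)) ∈ S := by
    intro m n v
    exact AddSubgroup.subset_closure ⟨m, n, v, rfl⟩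
  have hantider : ∀ s ∈ S, ∃ y ∈ S, D y = s := by
    intro s hs
    refine AddSubgroup.closure_induction ?_ ?_ ?_ ?_ hs
    · rintro x ⟨m, n, v, rfl⟩
      refine ⟨(T ^ m) ((U (n + 1)) (v : M)), hgen m (n + 1) v, ?_⟩
      rw [hDTm]
      rw [hDUv (v : M) (hmemD v) (n + 1) (Nat.succ_le_succ (Nat.zero_le n))]
      rfl
    · exact ⟨0, zero_mem S, map_zero D⟩
    · rintro x y _ _ ⟨a, ha, hda⟩ ⟨b, hb, hdb⟩
      exact ⟨a + b, add_mem ha hb, by rw [map_add, hda, hdb]⟩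
    · rintro x _ ⟨a, ha, hda⟩
      exact ⟨-a, neg_mem ha, by rw [map_neg, hda]⟩
  -- Claim A: ker D ∩ E-nilpotent ⊆ S
  have hA : ∀ (k : ℕ) (x : M), D x = 0 → (∀ d : ℕ, k ≤ d → (E d) x = 0) → x ∈ S := by
    intro k
    induction k with
    | zero =>
      intro x _ hE
      have : x = 0 := by
        have h0 := hE 0 (le_refl 0)
        rwa [hE0] at h0
      rw [this]; exact zero_mem S
    | succ j ih =>
      intro x hDx hEx
      set z : M := (E j) x with hz
      have hzD : D z = 0 := by
        have h := DFunLike.congr_fun (hDE j) x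
        rw [hmul, hmul] at h
        rw [hz, h, hDx, map_zero]
      have hzE : ∀ d : ℕ, 1 ≤ d → (E d) z = 0 := by
        intro d hd
        have h := DFunLike.congr_fun (hEE d j) x
        rw [hmul] at h
        rw [hz, h]
        have : (E (d + j)) x = 0 := hEx (d + j) (by omega)
        simp [this]
      have hzmem : z ∈ M₀ := (hM₀ z).mpr ⟨hzD, hzE⟩
      have hx' : x - (T ^ j) z ∈ S := by
        apply ih
        · rw [map_sub, hDx, hDTm, hzD, map_zero, sub_zero]
        · intro d hd
          rw [map_sub, hETn z hzE j d]
          rcases lt_or_eq_of_le hd with h | h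
          · rw [hEx d (by omega), Nat.choose_eq_zero_of_lt (by omega)]
            simp
          · subst h
            rw [Nat.choose_self, Nat.sub_self, one_smul, pow_zero]
            show (E j) x - z = 0
            rw [hz, sub_self]
      have hTz : (T ^ j) z ∈ S := by
        have := hgen j 0 ⟨z, hzmem⟩
        rwa [hU0] at this
      have : x = (x - (T ^ j) z) + (T ^ j) z := by abel
      rw [this]
      exact add_mem hx' hTz
  -- Claim B: D-nilpotent ⊆ S
  have hB : ∀ (k : ℕ) (x : M), (D ^ k) x = 0 → x ∈ S := by
    intro k
    induction k with
    | zero =>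
      intro x hx
      simp only [pow_zero] at hx
      have : x = 0 := hx
      rw [this]; exact zero_mem S
    | succ j ih =>
      intro x hx
      have hDxS : D x ∈ S := by
        apply ih
        have hps : (D ^ (j + 1)) x = (D ^ j) (D x) := by rw [pow_succ]; rfl
        rw [← hps]
        exact hx
      obtain ⟨y, hyS, hyD⟩ := hantider (D x) hDxS
      have hxy : x - y ∈ S := by
        obtain ⟨k, _, hEk⟩ := hnil (x - y)
        apply hA k
        · rw [map_sub, hyD, sub_self]
        · exact hEk
      have : x = (x - y) + y := by abel
      rw [this]
      exact add_mem hxy hyS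
  have hsurj : Function.Surjective φ' := by
    intro x
    obtain ⟨k, hk, _⟩ := hnil x
    have hxS : x ∈ S := hB k x hk
    have hle : S ≤ φ'.range := by
      rw [hS]
      apply AddSubgroup.closure_le _ |>.mpr
      rintro w ⟨m, n, v, rfl⟩
      refine ⟨Finsupp.single (m, n) v, ?_⟩
      rw [hφapp, Finsupp.sum_single_index]
      simp
    obtain ⟨a, ha⟩ := hle hxS
    exact ⟨a, ha⟩
  exact ⟨AddEquiv.ofBijective φ' ⟨hinj, hsurj⟩, fun a => hφapp a⟩
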